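/- If λ > ‖C‖ (operator norm where C ∈ ℝ^{m×m}), the map Φ(x)_i = softmax(−(b_i + Σ_j C_{ij}x_j)/λ) is a contraction on the product of simplices in the Euclidean norm, with Lipschitz constant at most ‖C‖/λ < 1; hence it has a unique fixed point. -/

import Mathlib

open Matrix Finset
open scoped Matrix.Norms.L2Operator

def simplex (k : ℕ) : Set (Fin k → ℝ) :=
  {y | ∑ i, y i = 1 ∧ ∀ i, 0 ≤ y i}

noncomputable def softmax {k : ℕ} (z : Fin k → ℝ) : Fin k → ℝ :=
  fun i => Real.exp (z i) / ∑ j, Real.exp (z j)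

/-- Euclidean norm of a joint strategy vector. -/
noncomputable def enorm {ι : Type*} [Fintype ι] (v : ι → ℝ) : ℝ :=
  Real.sqrt (∑ p, v p ^ 2)

section SoftmaxLemmas

variable {k : ℕ}

lemma sexp_pos [Nonempty (Fin k)] (z : Fin k → ℝ) : 0 < ∑ j, Real.exp (z j) :=
  Finset.sum_pos (fun j _ => Real.exp_pos _) Finset.univ_nonempty

lemma softmax_nonneg (z : Fin k → ℝ) (i : Fin k) : 0 ≤ softmax z i :=
  div_nonneg (Real.exp_pos _).le (Finset.sum_nonneg fun _ _ => (Real.exp_pos _).le)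

lemma softmax_sum [Nonempty (Fin k)] (z : Fin k → ℝ) : ∑ i, softmax z i = 1 := by
  simp only [softmax, ← Finset.sum_div]
  exact div_self (sexp_pos z).ne'

/-- candidate Jacobian of softmax -/
noncomputable def smJ (z : Fin k → ℝ) : EuclideanSpace ℝ (Fin k) →L[ℝ] EuclideanSpace ℝ (Fin k) :=
  ((PiLp.continuousLinearEquiv 2 ℝ (fun _ : Fin k => ℝ)).symm :
      (Fin k → ℝ) →L[ℝ] EuclideanSpace ℝ (Fin k)).comp
    (ContinuousLinearMap.pi (fun i =>
      softmax z i • ((EuclideanSpace.proj i : EuclideanSpace ℝ (Fin k) →L[ℝ] ℝ)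
        - ∑ j, softmax z j • (EuclideanSpace.proj j : EuclideanSpace ℝ (Fin k) →L[ℝ] ℝ))))

lemma smJ_apply (z : Fin k → ℝ) (v : EuclideanSpace ℝ (Fin k)) (i : Fin k) :
    smJ z v i = softmax z i * (v i - ∑ j, softmax z j * v j) := by
  simp [smJ, ContinuousLinearMap.pi_apply, smul_eq_mul]

lemma hasFDerivAt_softmax [Nonempty (Fin k)] (z : EuclideanSpace ℝ (Fin k)) :
    HasFDerivAt (fun w : EuclideanSpace ℝ (Fin k) =>
      ((PiLp.continuousLinearEquiv 2 ℝ (fun _ : Fin k => ℝ)).symm (softmax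
        ((PiLp.continuousLinearEquiv 2 ℝ (fun _ : Fin k => ℝ)) w)))) (smJ z) z := by
  set φ := PiLp.continuousLinearEquiv 2 ℝ (fun _ : Fin k => ℝ)
  rw [show (fun w : EuclideanSpace ℝ (Fin k) => φ.symm (softmax (φ w)))
      = φ.symm ∘ (fun w => softmax (φ w)) from rfl]
  rw [show smJ z = ((φ.symm : (Fin k → ℝ) →L[ℝ] EuclideanSpace ℝ (Fin k))).comp
      (ContinuousLinearMap.pi (fun i =>
        softmax z i • ((EuclideanSpace.proj i : EuclideanSpace ℝ (Fin k) →L[ℝ] ℝ)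
          - ∑ j, softmax z j • (EuclideanSpace.proj j : EuclideanSpace ℝ (Fin k) →L[ℝ] ℝ))))
      from rfl]
  rw [φ.symm.comp_hasFDerivAt_iff]
  apply hasFDerivAt_pi.2
  intro i
  have hSpos : (0:ℝ) < ∑ j, Real.exp (z j) := sexp_pos z
  set S : ℝ := ∑ j, Real.exp (z j) with hS
  have hproj : ∀ j : Fin k, HasFDerivAt (fun w : EuclideanSpace ℝ (Fin k) => Real.exp (w j))
      (Real.exp (z j) • (EuclideanSpace.proj j : EuclideanSpace ℝ (Fin k) →L[ℝ] ℝ)) z := by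
    intro j
    exact (Real.hasDerivAt_exp (z j)).comp_hasFDerivAt z
      (EuclideanSpace.proj j : EuclideanSpace ℝ (Fin k) →L[ℝ] ℝ).hasFDerivAt
  have hsum : HasFDerivAt (fun w : EuclideanSpace ℝ (Fin k) => ∑ j, Real.exp (w j))
      (∑ j, Real.exp (z j) • (EuclideanSpace.proj j : EuclideanSpace ℝ (Fin k) →L[ℝ] ℝ)) z := by
    have := HasFDerivAt.fun_sum (u := Finset.univ)
      (A := fun j (w : EuclideanSpace ℝ (Fin k)) => Real.exp (w j))
      (A' := fun j => Real.exp (z j) • (EuclideanSpace.proj j : EuclideanSpace ℝ (Fin k) →L[ℝ] ℝ))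
      (fun j _ => hproj j)
    simpa using this
  set dS := ∑ j, Real.exp (z j) • (EuclideanSpace.proj j : EuclideanSpace ℝ (Fin k) →L[ℝ] ℝ)
  have hinv : HasFDerivAt (fun w : EuclideanSpace ℝ (Fin k) => (∑ j, Real.exp (w j))⁻¹)
      ((-(S^2)⁻¹) • dS) z :=
    (hasDerivAt_inv hSpos.ne').comp_hasFDerivAt z hsum
  have hmul := (hproj i).fun_mul hinv
  have heq : (fun w : EuclideanSpace ℝ (Fin k) =>
      Real.exp (w i) * (∑ j, Real.exp (w j))⁻¹)
      = fun w => softmax (φ w) i := by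
    funext w
    simp [softmax, div_eq_mul_inv]
    rfl
  rw [heq] at hmul
  refine HasFDerivAt.congr_fderiv hmul (Eq.symm ?_)
  apply ContinuousLinearMap.ext
  intro v
  have hdSv : dS v = ∑ j, Real.exp (z j) * v j := by
    simp [dS, ContinuousLinearMap.sum_apply, smul_eq_mul]
  simp only [ContinuousLinearMap.comp_apply, ContinuousLinearMap.pi_apply,
    ContinuousLinearMap.proj_apply, ContinuousLinearMap.add_apply,
    ContinuousLinearMap.smul_apply, ContinuousLinearMap.sub_apply,
    ContinuousLinearMap.sum_apply, smul_eq_mul, hdSv, PiLp.proj_apply]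
  simp only [softmax, ← hS]
  have h1 : ∑ j, Real.exp (z j) / S * v j = (∑ j, Real.exp (z j) * v j) / S := by
    rw [Finset.sum_div]
    exact Finset.sum_congr rfl fun j _ => by ring
  rw [h1]
  field_simp
  ring

lemma key_sum (p v : Fin k → ℝ) (hp0 : ∀ i, 0 ≤ p i) (hp1 : ∑ i, p i = 1) :
    ∑ i, (p i * (v i - ∑ j, p j * v j))^2 ≤ ∑ i, (v i)^2 := by
  set s := ∑ j, p j * v j with hs
  have hple : ∀ i, p i ≤ 1 := fun i =>
    hp1 ▸ Finset.single_le_sum (fun j _ => hp0 j) (Finset.mem_univ i)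
  have h1 : ∑ i, (p i * (v i - s))^2 ≤ ∑ i, p i * (v i - s)^2 := by
    apply Finset.sum_le_sum
    intro i _
    rw [mul_pow]
    have : p i ^ 2 ≤ p i := by nlinarith [hp0 i, hple i]
    exact mul_le_mul_of_nonneg_right this (sq_nonneg _)
  have h2 : ∑ i, p i * (v i - s)^2 = (∑ i, p i * v i ^ 2) - s^2 := by
    have he : ∀ i, p i * (v i - s)^2 = p i * v i^2 - 2*s*(p i * v i) + s^2 * p i := fun i => by ring
    simp_rw [he]
    rw [Finset.sum_add_distrib, Finset.sum_sub_distrib, ← Finset.mul_sum, ← Finset.mul_sum, hp1,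
      ← hs]
    ring
  have h3 : ∑ i, p i * v i ^ 2 ≤ ∑ i, v i ^ 2 :=
    Finset.sum_le_sum fun i _ => by nlinarith [hple i, sq_nonneg (v i), hp0 i]
  nlinarith [sq_nonneg s]

lemma smJ_norm_le [Nonempty (Fin k)] (z : Fin k → ℝ) : ‖smJ z‖ ≤ 1 := by
  refine ContinuousLinearMap.opNorm_le_bound _ zero_le_one fun v => ?_
  rw [one_mul]
  have h1 : ‖smJ z v‖ = Real.sqrt (∑ i, (softmax z i * (v i - ∑ j, softmax z j * v j))^2) := by
    rw [EuclideanSpace.norm_eq]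
    congr 1
    exact Finset.sum_congr rfl fun i _ => by rw [smJ_apply, Real.norm_eq_abs, sq_abs]
  have h2 : ‖v‖ = Real.sqrt (∑ i, (v i)^2) := by
    rw [EuclideanSpace.norm_eq]
    congr 1
    exact Finset.sum_congr rfl fun i _ => by rw [Real.norm_eq_abs, sq_abs]
  rw [h1, h2]
  exact Real.sqrt_le_sqrt (key_sum _ _ (softmax_nonneg z) (softmax_sum z))

lemma softmax_sq_sum_le (z w : Fin k → ℝ) :
    ∑ i, (softmax z i - softmax w i)^2 ≤ ∑ i, (z i - w i)^2 := by
  rcases isEmpty_or_nonempty (Fin k) with h | h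
  · simp
  set φ := PiLp.continuousLinearEquiv 2 ℝ (fun _ : Fin k => ℝ) with hφ
  set f : EuclideanSpace ℝ (Fin k) → EuclideanSpace ℝ (Fin k) :=
    fun u => φ.symm (softmax (φ u)) with hf
  have key := Convex.norm_image_sub_le_of_norm_fderiv_le (f := f) (C := 1) (s := Set.univ)
    (fun x _ => (hasFDerivAt_softmax x).differentiableAt)
    (fun x _ => by rw [(hasFDerivAt_softmax x).fderiv]; exact smJ_norm_le (φ x))
    convex_univ (Set.mem_univ (φ.symm w)) (Set.mem_univ (φ.symm z))
  rw [one_mul] at key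
  have hL : ‖f (φ.symm z) - f (φ.symm w)‖
      = Real.sqrt (∑ i, (softmax z i - softmax w i)^2) := by
    rw [EuclideanSpace.norm_eq]
    congr 1
    refine Finset.sum_congr rfl fun i _ => ?_
    rw [Real.norm_eq_abs, sq_abs]
    rfl
  have hR : ‖φ.symm z - φ.symm w‖ = Real.sqrt (∑ i, (z i - w i)^2) := by
    rw [EuclideanSpace.norm_eq]
    congr 1
    refine Finset.sum_congr rfl fun i _ => ?_
    rw [Real.norm_eq_abs, sq_abs]
    rfl
  rw [hL, hR] at key
  have h0 : (0:ℝ) ≤ ∑ i, (softmax z i - softmax w i)^2 :=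
    Finset.sum_nonneg fun i _ => sq_nonneg _
  have h0' : (0:ℝ) ≤ ∑ i, (z i - w i)^2 := Finset.sum_nonneg fun i _ => sq_nonneg _
  calc ∑ i, (softmax z i - softmax w i)^2
      = Real.sqrt (∑ i, (softmax z i - softmax w i)^2) ^ 2 := (Real.sq_sqrt h0).symm
    _ ≤ Real.sqrt (∑ i, (z i - w i)^2) ^ 2 := by
        apply pow_le_pow_left₀ (Real.sqrt_nonneg _) key
    _ = ∑ i, (z i - w i)^2 := Real.sq_sqrt h0'

end SoftmaxLemmas

lemma enorm_eq_norm {ι : Type*} [Fintype ι] (v : ι → ℝ) :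
    _root_.enorm v = ‖(EuclideanSpace.equiv ι ℝ).symm v‖ := by
  rw [_root_.enorm, EuclideanSpace.norm_eq]
  exact congrArg Real.sqrt (Finset.sum_congr rfl fun i _ => by
    rw [Real.norm_eq_abs, sq_abs]; rfl)

/-- if `λ > ‖C‖` (ℓ₂ operator norm), the stacked quantal response
map is a contraction on the product of simplices with Lipschitz constant at most
`‖C‖/λ < 1` in the Euclidean norm, and hence has a unique fixed point there. -/
theorem stmt19 {n : ℕ} {m : Fin n → ℕ} (hm : ∀ i, 0 < m i)
    (b : ((i : Fin n) × Fin (m i)) → ℝ)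
    (C : Matrix ((i : Fin n) × Fin (m i)) ((i : Fin n) × Fin (m i)) ℝ)
    (lam : ℝ) (hlam : ‖C‖ < lam) :
    let Φ : (((i : Fin n) × Fin (m i)) → ℝ) → (((i : Fin n) × Fin (m i)) → ℝ) :=
      fun x p => softmax (fun a => -(b ⟨p.1, a⟩ + C.mulVec x ⟨p.1, a⟩) / lam) p.2
    let S : Set (((i : Fin n) × Fin (m i)) → ℝ) :=
      {x | ∀ i : Fin n, (fun a => x ⟨i, a⟩) ∈ simplex (m i)}
    (∀ x ∈ S, ∀ y ∈ S, _root_.enorm (Φ x - Φ y) ≤ (‖C‖ / lam) * _root_.enorm (x - y)) ∧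
      ∃! x, x ∈ S ∧ Φ x = x := by
  intro Φ S
  have hlam0 : (0:ℝ) < lam := lt_of_le_of_lt (norm_nonneg C) hlam
  -- the contraction estimate, valid for ALL x y
  have key : ∀ x y : ((i : Fin n) × Fin (m i)) → ℝ,
      _root_.enorm (Φ x - Φ y) ≤ (‖C‖ / lam) * _root_.enorm (x - y) := by
    intro x y
    have hsum : ∑ p : (i : Fin n) × Fin (m i), (Φ x p - Φ y p)^2
        ≤ ∑ p : (i : Fin n) × Fin (m i), ((C.mulVec (y - x)) p / lam)^2 := by
      rw [← Finset.univ_sigma_univ, Finset.sum_sigma, Finset.sum_sigma]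
      apply Finset.sum_le_sum
      intro i _
      have hb := softmax_sq_sum_le
        (fun a => -(b ⟨i, a⟩ + C.mulVec x ⟨i, a⟩) / lam)
        (fun a => -(b ⟨i, a⟩ + C.mulVec y ⟨i, a⟩) / lam)
      have h2 : ∑ a, (-(b ⟨i, a⟩ + C.mulVec x ⟨i, a⟩) / lam
            - -(b ⟨i, a⟩ + C.mulVec y ⟨i, a⟩) / lam)^2
          = ∑ a, ((C.mulVec (y - x)) ⟨i, a⟩ / lam)^2 := by
        refine Finset.sum_congr rfl fun a _ => ?_
        rw [Matrix.mulVec_sub, Pi.sub_apply]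
        ring
      rw [← h2]
      exact hb
    have hCv : _root_.enorm (C.mulVec (y - x)) ≤ ‖C‖ * _root_.enorm (y - x) := by
      calc _root_.enorm (C.mulVec (y - x))
          = ‖(EuclideanSpace.equiv ((i : Fin n) × Fin (m i)) ℝ).symm
              (C *ᵥ ((EuclideanSpace.equiv ((i : Fin n) × Fin (m i)) ℝ).symm (y - x)))‖ :=
            enorm_eq_norm _
        _ ≤ ‖C‖ * ‖(EuclideanSpace.equiv ((i : Fin n) × Fin (m i)) ℝ).symm (y - x)‖ :=
            C.l2_opNorm_mulVec _
        _ = ‖C‖ * _root_.enorm (y - x) := by rw [← enorm_eq_norm]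
    have hyx : _root_.enorm (y - x) = _root_.enorm (x - y) := by
      rw [_root_.enorm, _root_.enorm]
      exact congrArg Real.sqrt (Finset.sum_congr rfl fun p _ => by
        rw [Pi.sub_apply, Pi.sub_apply]; ring)
    have e2 : Real.sqrt (∑ p : (i : Fin n) × Fin (m i), ((C.mulVec (y - x)) p / lam)^2)
        = _root_.enorm (C.mulVec (y - x)) / lam := by
      rw [_root_.enorm]
      rw [show ∑ p : (i : Fin n) × Fin (m i), ((C.mulVec (y - x)) p / lam)^2
          = (∑ p : (i : Fin n) × Fin (m i), (C.mulVec (y - x) p)^2) / lam^2 from by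
        rw [Finset.sum_div]; exact Finset.sum_congr rfl fun p _ => by ring]
      rw [Real.sqrt_div (Finset.sum_nonneg fun p _ => sq_nonneg _), Real.sqrt_sq hlam0.le]
    calc _root_.enorm (Φ x - Φ y)
        = Real.sqrt (∑ p : (i : Fin n) × Fin (m i), (Φ x p - Φ y p)^2) := by
          rw [_root_.enorm]
          exact congrArg Real.sqrt (Finset.sum_congr rfl fun p _ => by rw [Pi.sub_apply])
      _ ≤ Real.sqrt (∑ p : (i : Fin n) × Fin (m i), ((C.mulVec (y - x)) p / lam)^2) :=
          Real.sqrt_le_sqrt hsum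
      _ = _root_.enorm (C.mulVec (y - x)) / lam := e2
      _ ≤ (‖C‖ * _root_.enorm (y - x)) / lam := by gcongr
      _ = (‖C‖ / lam) * _root_.enorm (x - y) := by rw [hyx]; ring
  have hmem : ∀ x : ((i : Fin n) × Fin (m i)) → ℝ, Φ x ∈ S := by
    intro x
    show ∀ i : Fin n, _ ∈ simplex (m i)
    intro i
    have : Nonempty (Fin (m i)) := ⟨⟨0, hm i⟩⟩
    exact ⟨softmax_sum _, fun a => softmax_nonneg _ a⟩
  refine ⟨fun x _ y _ => key x y, ?_⟩
  -- contraction on EuclideanSpace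
  set q : NNReal := ⟨‖C‖ / lam, div_nonneg (norm_nonneg C) hlam0.le⟩ with hq
  have hq1 : q < 1 := by
    rw [← NNReal.coe_lt_coe]
    exact (div_lt_one hlam0).2 hlam
  set Φ' : EuclideanSpace ℝ ((i : Fin n) × Fin (m i)) →
      EuclideanSpace ℝ ((i : Fin n) × Fin (m i)) :=
    fun u => (EuclideanSpace.equiv ((i : Fin n) × Fin (m i)) ℝ).symm
      (Φ ((EuclideanSpace.equiv ((i : Fin n) × Fin (m i)) ℝ) u)) with hΦ'
  have hlip : LipschitzWith q Φ' := by
    apply LipschitzWith.of_dist_le_mul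
    intro u v
    rw [dist_eq_norm, dist_eq_norm]
    have h1 : ‖Φ' u - Φ' v‖
        = _root_.enorm (Φ ((EuclideanSpace.equiv ((i : Fin n) × Fin (m i)) ℝ) u)
            - Φ ((EuclideanSpace.equiv ((i : Fin n) × Fin (m i)) ℝ) v)) :=
      (enorm_eq_norm _).symm
    have h2 : ‖u - v‖ = _root_.enorm (((EuclideanSpace.equiv ((i : Fin n) × Fin (m i)) ℝ) u)
        - ((EuclideanSpace.equiv ((i : Fin n) × Fin (m i)) ℝ) v)) :=
      (enorm_eq_norm _).symm
    rw [h1, h2]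
    exact key _ _
  have hcontr : ContractingWith q Φ' := ⟨hq1, hlip⟩
  have hfix : Φ' (ContractingWith.fixedPoint Φ' hcontr) = ContractingWith.fixedPoint Φ' hcontr :=
    hcontr.fixedPoint_isFixedPt
  refine ⟨(EuclideanSpace.equiv ((i : Fin n) × Fin (m i)) ℝ)
    (ContractingWith.fixedPoint Φ' hcontr), ⟨?_, ?_⟩, ?_⟩
  · have h : (EuclideanSpace.equiv ((i : Fin n) × Fin (m i)) ℝ)
        (ContractingWith.fixedPoint Φ' hcontr)
        = Φ ((EuclideanSpace.equiv ((i : Fin n) × Fin (m i)) ℝ)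
            (ContractingWith.fixedPoint Φ' hcontr)) :=
      congrArg (EuclideanSpace.equiv ((i : Fin n) × Fin (m i)) ℝ) hfix.symm
    rw [h]
    exact hmem _
  · exact congrArg (EuclideanSpace.equiv ((i : Fin n) × Fin (m i)) ℝ) hfix
  · rintro y ⟨-, hy⟩
    have hyfix : Function.IsFixedPt Φ'
        ((EuclideanSpace.equiv ((i : Fin n) × Fin (m i)) ℝ).symm y) :=
      congrArg (EuclideanSpace.equiv ((i : Fin n) × Fin (m i)) ℝ).symm hy
    exact congrArg (EuclideanSpace.equiv ((i : Fin n) × Fin (m i)) ℝ)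
      (hcontr.fixedPoint_unique hyfix)
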